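/- The derivative of the Riemann zeta function at −1 satisfies ζ′(−1) = 2 ∫₀^∞ (w ln w)/(e^{2πw} − 1) dw = 2c, where c = ∫₀^∞ (y log y)/(e^{2πy} − 1) dy. -/

import Mathlib

open Real Complex

/-- The constant `c = ∫₀^∞ y log y / (e^{2πy} - 1) dy`. -/
noncomputable def cConst : ℝ := ∫ y in Set.Ioi (0 : ℝ), y * Real.log y / (Real.exp (2 * π * y) - 1)

open MeasureTheory Set Filter

local notation "γ" => Real.eulerMascheroniConstant

/-- key integrability: `y * |log y| * exp (-(a*y))` integrable on `Ioi 0`. -/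
lemma integrable_abs_aux {a : ℝ} (ha : 0 < a) :
    IntegrableOn (fun y : ℝ => y * |Real.log y| * Real.exp (-(a * y))) (Ioi 0) := by
  have h1 : IntegrableOn (fun y : ℝ => y ^ ((1:ℝ)/2) * Real.exp (-a * y ^ (1:ℝ))) (Ioi 0) :=
    integrableOn_rpow_mul_exp_neg_mul_rpow (by norm_num) one_pos ha
  have h2 : IntegrableOn (fun y : ℝ => y ^ (2:ℝ) * Real.exp (-a * y ^ (1:ℝ))) (Ioi 0) :=
    integrableOn_rpow_mul_exp_neg_mul_rpow (by norm_num) one_pos ha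
  have hbd : IntegrableOn
      (fun y : ℝ => 2 * (y ^ ((1:ℝ)/2) * Real.exp (-a * y ^ (1:ℝ)))
        + y ^ (2:ℝ) * Real.exp (-a * y ^ (1:ℝ))) (Ioi 0) := (h1.const_mul 2).add h2
  refine hbd.mono' ?_ ?_
  · refine (Measurable.aestronglyMeasurable ?_)
    exact ((measurable_id.mul (Real.measurable_log.abs)).mul
      ((measurable_const.mul measurable_id).neg.exp))
  · rw [ae_restrict_iff' measurableSet_Ioi]
    filter_upwards with y hy
    have hy0 : (0:ℝ) < y := hy
    rw [Real.rpow_one]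
    have hexp : (0:ℝ) < Real.exp (-(a*y)) := Real.exp_pos _
    have hsq : (0:ℝ) < Real.sqrt y := Real.sqrt_pos.2 hy0
    have key : y * |Real.log y| ≤ 2 * y ^ ((1:ℝ)/2) + y ^ (2:ℝ) := by
      have hsqrt_eq : y ^ ((1:ℝ)/2) = Real.sqrt y := (Real.sqrt_eq_rpow y).symm
      have hsq_eq : y ^ (2:ℝ) = y^2 := by rw [Real.rpow_two]
      rcases le_or_gt y 1 with h|h
      · have hlog : Real.log y ≤ 0 := Real.log_nonpos hy0.le h
        have habs : |Real.log y| = -Real.log y := _root_.abs_of_nonpos hlog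
        have : -Real.log y ≤ 2 / Real.sqrt y := by
          have h1 : Real.log (Real.sqrt y) = Real.log y / 2 := Real.log_sqrt hy0.le
          have h2 : Real.log (Real.sqrt y)⁻¹ ≤ (Real.sqrt y)⁻¹ - 1 :=
            Real.log_le_sub_one_of_pos (by positivity)
          rw [Real.log_inv, h1] at h2
          have h3 : -Real.log y ≤ 2 * (Real.sqrt y)⁻¹ := by linarith
          rwa [div_eq_mul_inv]
        have : y * -Real.log y ≤ y * (2 / Real.sqrt y) :=
          mul_le_mul_of_nonneg_left this hy0.le
        have hys : y * (2 / Real.sqrt y) = 2 * Real.sqrt y := by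
          rw [mul_div_assoc']; rw [mul_comm y 2, mul_div_assoc, Real.div_sqrt]
        rw [habs]
        calc y * -Real.log y ≤ 2 * Real.sqrt y := by rw [← hys]; exact this
        _ ≤ 2 * y ^ ((1:ℝ)/2) + y ^ (2:ℝ) := by
            rw [hsqrt_eq]; have := Real.rpow_nonneg hy0.le (2:ℝ); linarith
      · have hlog : (0:ℝ) ≤ Real.log y := Real.log_nonneg h.le
        have habs : |Real.log y| = Real.log y := _root_.abs_of_nonneg hlog
        have h2 : Real.log y ≤ y - 1 := Real.log_le_sub_one_of_pos hy0
        rw [habs, hsq_eq]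
        have := Real.rpow_nonneg hy0.le ((1:ℝ)/2)
        nlinarith
    have hn : ‖y * |Real.log y| * Real.exp (-(a * y))‖ = y * |Real.log y| * Real.exp (-(a*y)) := by
      rw [Real.norm_eq_abs, _root_.abs_of_nonneg]; positivity
    rw [hn]
    have : y * |Real.log y| * Real.exp (-(a*y)) ≤ (2 * y ^ ((1:ℝ)/2) + y ^ (2:ℝ)) * Real.exp (-(a*y)) :=
      mul_le_mul_of_nonneg_right key hexp.le
    calc y * |Real.log y| * Real.exp (-(a*y)) ≤ (2 * y ^ ((1:ℝ)/2) + y ^ (2:ℝ)) * Real.exp (-(a*y)) := this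
    _ = 2 * (y ^ ((1:ℝ)/2) * Real.exp (-a * y)) + y ^ (2:ℝ) * Real.exp (-a*y) := by ring_nf

lemma hasDerivAt_realGamma_two : HasDerivAt Real.Gamma (1 - γ) 2 := by
  have hd : DifferentiableAt ℝ Real.Gamma 2 := by
    refine Real.differentiableAt_Gamma fun m => ?_
    have h0 : (0:ℝ) ≤ m := Nat.cast_nonneg m
    intro h
    linarith [h0, h.symm.le, h.le]
  have hv := Real.deriv_Gamma_nat 1
  norm_num [harmonic_succ, harmonic_zero] at hv
  have he : (1 - γ) = -γ + 1 := by ring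
  rw [he, ← hv]
  exact hd.hasDerivAt

lemma hasDerivAt_complexGamma_two :
    HasDerivAt Complex.Gamma (((1 - γ : ℝ) : ℂ)) 2 := by
  have hne : ∀ m : ℕ, (2:ℂ) ≠ -m := by
    intro m h
    have h1 : (2:ℝ) = -(m:ℝ) := by exact_mod_cast congrArg Complex.re h
    have h2 : (0:ℝ) ≤ (m:ℝ) := Nat.cast_nonneg m
    linarith
  have hd : DifferentiableAt ℂ Complex.Gamma 2 := Complex.differentiableAt_Gamma _ hne
  have h2 : HasDerivAt Complex.Gamma (deriv Complex.Gamma 2) 2 := hd.hasDerivAt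
  have h2' : HasDerivAt Complex.Gamma (deriv Complex.Gamma 2) (((2:ℝ):ℂ)) := by
    norm_num at h2 ⊢; exact h2
  have h3 : HasDerivAt (fun y : ℝ => Complex.Gamma (y : ℂ)) (deriv Complex.Gamma 2) 2 :=
    h2'.comp_ofReal
  have h4 : HasDerivAt (fun y : ℝ => ((Real.Gamma y : ℝ) : ℂ)) (((1 - γ : ℝ) : ℂ)) 2 :=
    hasDerivAt_realGamma_two.ofReal_comp
  have h5 : HasDerivAt (fun y : ℝ => Complex.Gamma (y : ℂ)) (((1 - γ : ℝ) : ℂ)) 2 := by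
    refine h4.congr_of_eventuallyEq ?_
    filter_upwards with y
    exact Complex.Gamma_ofReal y
  have : deriv Complex.Gamma 2 = ((1 - γ : ℝ) : ℂ) := h3.unique h5
  rwa [this] at h2

lemma integral_t_log_t_exp : ∫ t in Ioi (0:ℝ), t * Real.log t * Real.exp (-t) = 1 - γ := by
  have h2 : HasDerivAt Complex.GammaIntegral
      (∫ t : ℝ in Ioi 0, (t:ℂ) ^ ((2:ℂ) - 1) * (Real.log t * Real.exp (-t))) 2 :=
    Complex.hasDerivAt_GammaIntegral (by norm_num)
  have hev : Complex.Gamma =ᶠ[nhds (2:ℂ)] Complex.GammaIntegral := by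
    have hopen : IsOpen {s : ℂ | 0 < s.re} := isOpen_lt continuous_const Complex.continuous_re
    filter_upwards [hopen.mem_nhds (by norm_num : (0:ℝ) < (2:ℂ).re)] with s hs
    exact Complex.Gamma_eq_integral hs
  have h3 : HasDerivAt Complex.Gamma
      (∫ t : ℝ in Ioi 0, (t:ℂ) ^ ((2:ℂ) - 1) * (Real.log t * Real.exp (-t))) 2 :=
    h2.congr_of_eventuallyEq hev
  have key : (∫ t : ℝ in Ioi 0, (t:ℂ) ^ ((2:ℂ) - 1) * (Real.log t * Real.exp (-t)))
      = ((1 - γ : ℝ) : ℂ) := h3.unique hasDerivAt_complexGamma_two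
  have heq : (∫ t : ℝ in Ioi 0, (t:ℂ) ^ ((2:ℂ) - 1) * (Real.log t * Real.exp (-t)))
      = ((∫ t in Ioi (0:ℝ), t * Real.log t * Real.exp (-t) : ℝ) : ℂ) := by
    have step1 : (∫ t : ℝ in Ioi 0, (t:ℂ) ^ ((2:ℂ) - 1) * (Real.log t * Real.exp (-t)))
        = ∫ t in Ioi (0:ℝ), ((t * Real.log t * Real.exp (-t) : ℝ) : ℂ) := by
      refine setIntegral_congr_fun measurableSet_Ioi fun t ht => ?_
      have : ((2:ℂ) - 1) = 1 := by norm_num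
      rw [this, Complex.cpow_one]
      push_cast
      ring
    rw [step1]
    exact integral_ofReal
  rw [heq] at key
  exact_mod_cast key

lemma integrable_aux {a : ℝ} (ha : 0 < a) :
    IntegrableOn (fun y : ℝ => y * Real.log y * Real.exp (-(a * y))) (Ioi 0) := by
  refine (integrable_abs_aux ha).mono' ?_ ?_
  · exact ((measurable_id.mul Real.measurable_log).mul
      ((measurable_const.mul measurable_id).neg.exp)).aestronglyMeasurable
  · rw [ae_restrict_iff' measurableSet_Ioi]
    filter_upwards with y hy
    have hy0 : (0:ℝ) < y := hy
    rw [Real.norm_eq_abs, _root_.abs_mul, _root_.abs_mul, _root_.abs_of_pos hy0, _root_.abs_of_pos (Real.exp_pos _)]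

lemma integrable_t_exp : IntegrableOn (fun t : ℝ => t * Real.exp (-t)) (Ioi 0) := by
  have h := Real.GammaIntegral_convergent (s := 2) (by norm_num)
  refine h.congr_fun (fun t ht => ?_) measurableSet_Ioi
  beta_reduce
  rw [show (2:ℝ) - 1 = 1 by norm_num, Real.rpow_one]; ring

lemma integral_t_exp : ∫ t in Ioi (0:ℝ), t * Real.exp (-t) = 1 := by
  have h := Real.Gamma_eq_integral (s := 2) (by norm_num)
  rw [Real.Gamma_two] at h
  rw [h]
  refine setIntegral_congr_fun measurableSet_Ioi fun t ht => ?_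
  rw [show (2:ℝ) - 1 = 1 by norm_num, Real.rpow_one]; ring

lemma integrable_t_log_t_exp :
    IntegrableOn (fun t : ℝ => t * Real.log t * Real.exp (-t)) (Ioi 0) := by
  have := integrable_aux (a := 1) one_pos
  refine this.congr_fun (fun t ht => ?_) measurableSet_Ioi
  simp only [one_mul]

lemma integrable_t_abslog_t_exp :
    IntegrableOn (fun t : ℝ => t * |Real.log t| * Real.exp (-t)) (Ioi 0) := by
  have := integrable_abs_aux (a := 1) one_pos
  refine this.congr_fun (fun t ht => ?_) measurableSet_Ioi
  simp only [one_mul]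

lemma value_aux {a : ℝ} (ha : 0 < a) :
    ∫ y in Ioi (0:ℝ), y * Real.log y * Real.exp (-(a * y))
      = (1 - γ - Real.log a) / a ^ 2 := by
  have hsub := integral_comp_mul_right_Ioi
    (fun t => t / a * Real.log (t / a) * Real.exp (-t)) 0 ha
  simp only [zero_mul, smul_eq_mul] at hsub
  have hleft : (∫ y in Ioi (0:ℝ), y * a / a * Real.log (y * a / a) * Real.exp (-(y * a)))
      = ∫ y in Ioi (0:ℝ), y * Real.log y * Real.exp (-(a * y)) := by
    refine setIntegral_congr_fun measurableSet_Ioi fun y hy => ?_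
    rw [mul_div_assoc, div_self ha.ne', mul_one, mul_comm y a]
  rw [← hleft, hsub]
  have hright : (∫ t in Ioi (0:ℝ), t / a * Real.log (t / a) * Real.exp (-t))
      = a⁻¹ * (∫ t in Ioi (0:ℝ), t * Real.log t * Real.exp (-t))
        - Real.log a * a⁻¹ * (∫ t in Ioi (0:ℝ), t * Real.exp (-t)) := by
    rw [← integral_const_mul, ← integral_const_mul, ← integral_sub
      ((integrable_t_log_t_exp).const_mul _) ((integrable_t_exp).const_mul _)]
    refine setIntegral_congr_fun measurableSet_Ioi fun t ht => ?_
    have ht0 : (0:ℝ) < t := ht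
    rw [Real.log_div ht0.ne' ha.ne']
    field_simp
  rw [hright, integral_t_log_t_exp, integral_t_exp]
  rw [eq_div_iff (by positivity : (a:ℝ)^2 ≠ 0)]
  field_simp
  try tauto

lemma norm_value_aux {a : ℝ} (ha : 1 ≤ a) :
    ∫ y in Ioi (0:ℝ), ‖y * Real.log y * Real.exp (-(a * y))‖
      ≤ ((∫ t in Ioi (0:ℝ), t * |Real.log t| * Real.exp (-t)) + Real.log a) / a ^ 2 := by
  have ha0 : (0:ℝ) < a := lt_of_lt_of_le one_pos ha
  have hnorm : (∫ y in Ioi (0:ℝ), ‖y * Real.log y * Real.exp (-(a * y))‖)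
      = ∫ y in Ioi (0:ℝ), y * |Real.log y| * Real.exp (-(a * y)) := by
    refine setIntegral_congr_fun measurableSet_Ioi fun y hy => ?_
    have hy0 : (0:ℝ) < y := hy
    rw [Real.norm_eq_abs, _root_.abs_mul, _root_.abs_mul, _root_.abs_of_pos hy0, _root_.abs_of_pos (Real.exp_pos _)]
  rw [hnorm]
  have hsub := integral_comp_mul_right_Ioi
    (fun t => t / a * |Real.log (t / a)| * Real.exp (-t)) 0 ha0
  simp only [zero_mul, smul_eq_mul] at hsub
  have hleft : (∫ y in Ioi (0:ℝ), y * a / a * |Real.log (y * a / a)| * Real.exp (-(y * a)))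
      = ∫ y in Ioi (0:ℝ), y * |Real.log y| * Real.exp (-(a * y)) := by
    refine setIntegral_congr_fun measurableSet_Ioi fun y hy => ?_
    rw [mul_div_assoc, div_self ha0.ne', mul_one, mul_comm y a]
  rw [← hleft, hsub]
  have hbound : (∫ t in Ioi (0:ℝ), t / a * |Real.log (t / a)| * Real.exp (-t))
      ≤ a⁻¹ * ((∫ t in Ioi (0:ℝ), t * |Real.log t| * Real.exp (-t)) + Real.log a) := by
    have hint : IntegrableOn
        (fun t : ℝ => a⁻¹ * ((t * |Real.log t| + t * Real.log a) * Real.exp (-t))) (Ioi 0) := by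
      refine (Integrable.const_mul ?_ _)
      have : IntegrableOn (fun t : ℝ => t * |Real.log t| * Real.exp (-t)
          + Real.log a * (t * Real.exp (-t))) (Ioi 0) :=
        integrable_t_abslog_t_exp.add (integrable_t_exp.const_mul _)
      refine this.congr_fun (fun t ht => ?_) measurableSet_Ioi
      ring
    have step : (∫ t in Ioi (0:ℝ), t / a * |Real.log (t / a)| * Real.exp (-t))
        ≤ ∫ t in Ioi (0:ℝ), a⁻¹ * ((t * |Real.log t| + t * Real.log a) * Real.exp (-t)) := by
      refine integral_mono_of_nonneg ?_ hint ?_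
      · filter_upwards [self_mem_ae_restrict measurableSet_Ioi] with t ht
        have ht0 : (0:ℝ) < t := ht
        positivity
      · filter_upwards [self_mem_ae_restrict measurableSet_Ioi] with t ht
        have ht0 : (0:ℝ) < t := ht
        have hlog : |Real.log (t / a)| ≤ |Real.log t| + Real.log a := by
          rw [Real.log_div ht0.ne' ha0.ne']
          calc |Real.log t - Real.log a| ≤ |Real.log t| + |Real.log a| := _root_.abs_sub _ _
          _ = |Real.log t| + Real.log a := by rw [_root_.abs_of_nonneg (Real.log_nonneg ha)]
        have h1 : t / a * |Real.log (t / a)| * Real.exp (-t)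
            ≤ t / a * (|Real.log t| + Real.log a) * Real.exp (-t) := by
          have := mul_le_mul_of_nonneg_left hlog (le_of_lt (div_pos ht0 ha0))
          exact mul_le_mul_of_nonneg_right this (Real.exp_pos _).le
        calc t / a * |Real.log (t / a)| * Real.exp (-t)
            ≤ t / a * (|Real.log t| + Real.log a) * Real.exp (-t) := h1
        _ = a⁻¹ * ((t * |Real.log t| + t * Real.log a) * Real.exp (-t)) := by
            field_simp
    rw [integral_const_mul] at step
    refine step.trans ?_
    have : (∫ t in Ioi (0:ℝ), (t * |Real.log t| + t * Real.log a) * Real.exp (-t))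
        = (∫ t in Ioi (0:ℝ), t * |Real.log t| * Real.exp (-t))
          + Real.log a * (∫ t in Ioi (0:ℝ), t * Real.exp (-t)) := by
      rw [← integral_const_mul, ← integral_add integrable_t_abslog_t_exp
        (integrable_t_exp.const_mul _)]
      refine setIntegral_congr_fun measurableSet_Ioi fun t ht => ?_
      ring
    rw [this, integral_t_exp, mul_one]
  refine le_trans (mul_le_mul_of_nonneg_left hbound (by positivity)) (le_of_eq ?_)
  rw [div_eq_mul_inv, pow_two, mul_inv]
  ring

noncomputable def Sc : ℝ := ∑' n : ℕ, Real.log ((n:ℝ)+1) / ((n:ℝ)+1)^2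

lemma summable_sc : Summable (fun n : ℕ => Real.log ((n:ℝ)+1) / ((n:ℝ)+1)^2) := by
  have h32 : Summable (fun n : ℕ => ((n:ℝ))^(-(3/2:ℝ))) :=
    Real.summable_nat_rpow.mpr (by norm_num)
  have h32' : Summable (fun n : ℕ => (((n:ℝ)+1))^(-(3/2:ℝ))) := by
    have := (summable_nat_add_iff (f := fun n : ℕ => ((n:ℝ))^(-(3/2:ℝ))) 1).mpr h32
    refine this.congr fun n => ?_
    push_cast
    norm_num
  refine Summable.of_nonneg_of_le (fun n => ?_) (fun n => ?_) (h32'.mul_left 2)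
  · have h1 : (0:ℝ) < (n:ℝ)+1 := by positivity
    have := Real.log_nonneg (by linarith : (1:ℝ) ≤ (n:ℝ)+1)
    positivity
  · set x : ℝ := (n:ℝ)+1 with hx
    have hx0 : (0:ℝ) < x := by positivity
    have hx1 : (1:ℝ) ≤ x := by simp [hx]
    have hlog : Real.log x ≤ 2 * x ^ ((1:ℝ)/2) := by
      have h1 : Real.log (Real.sqrt x) ≤ Real.sqrt x - 1 := Real.log_le_sub_one_of_pos (Real.sqrt_pos.2 hx0)
      have h2 : Real.log (Real.sqrt x) = Real.log x / 2 := Real.log_sqrt hx0.le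
      have h3 : Real.sqrt x = x ^ ((1:ℝ)/2) := Real.sqrt_eq_rpow x
      rw [h2, h3] at h1
      linarith
    have key : Real.log x / x^2 ≤ 2 * x ^ (-(3/2:ℝ)) := by
      rw [div_le_iff₀ (by positivity)]
      have heq : 2 * x ^ (-(3/2:ℝ)) * x^2 = 2 * x ^ ((1:ℝ)/2) := by
        rw [← Real.rpow_natCast x 2, mul_assoc, ← Real.rpow_add hx0]
        norm_num
      rw [heq]
      exact hlog
    exact key

lemma hasSumB : HasSum (fun n : ℕ => 1 / ((n:ℝ)+1)^2) (π^2/6) := by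
  have h := hasSum_zeta_two
  have hsm : Summable (fun n : ℕ => (1:ℝ) / ((n:ℝ)+1)^2) := by
    have h1 := (summable_nat_add_iff (f := fun n : ℕ => (1:ℝ) / (n:ℝ)^2) 1).mpr h.summable
    refine h1.congr fun n => ?_
    push_cast
    ring_nf
  have ht := h.summable.tsum_eq_zero_add
  have h00 : (1:ℝ) / ((0:ℕ):ℝ)^2 = 0 := by norm_num
  rw [h.tsum_eq, h00, zero_add] at ht
  refine hsm.hasSum_iff.mpr ?_
  rw [ht]
  refine tsum_congr fun n => ?_
  push_cast
  ring_nf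

lemma integral_key :
    ∫ y in Ioi (0:ℝ), y * Real.log y / (Real.exp (2 * π * y) - 1)
      = (1 - γ - Real.log (2*π)) / 24 - Sc / (4 * π^2) := by
  set K : ℝ := ∫ t in Ioi (0:ℝ), t * |Real.log t| * Real.exp (-t) with hK
  set F : ℕ → ℝ → ℝ := fun n y => y * Real.log y * Real.exp (-(2 * π * ((n:ℝ)+1) * y)) with hF
  have hpos : ∀ n : ℕ, (0:ℝ) < 2 * π * ((n:ℝ)+1) := fun n => by positivity
  have hone : ∀ n : ℕ, (1:ℝ) ≤ 2 * π * ((n:ℝ)+1) := by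
    intro n
    have h0 : (0:ℝ) ≤ (n:ℝ) := Nat.cast_nonneg n
    nlinarith [Real.pi_gt_three]
  have hF_int : ∀ n : ℕ, Integrable (F n) (volume.restrict (Ioi 0)) := fun n =>
    integrable_aux (hpos n)
  -- summability of the norms of the integrals
  have hF_sum : Summable fun n : ℕ => ∫ y in Ioi (0:ℝ), ‖F n y‖ := by
    have hbig : Summable (fun n : ℕ =>
        (K + Real.log (2*π)) / (4*π^2) * (1 / ((n:ℝ)+1)^2)
          + 1 / (4*π^2) * (Real.log ((n:ℝ)+1) / ((n:ℝ)+1)^2)) :=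
      ((hasSumB.summable).mul_left _).add (summable_sc.mul_left _)
    refine Summable.of_nonneg_of_le (fun n => ?_) (fun n => ?_) hbig
    · exact integral_nonneg fun y => norm_nonneg _
    · refine (norm_value_aux (hone n)).trans (le_of_eq ?_)
      have hn1 : (0:ℝ) < (n:ℝ)+1 := by positivity
      rw [Real.log_mul (by positivity) hn1.ne']
      field_simp
      ring
  have hswap := integral_tsum_of_summable_integral_norm hF_int hF_sum
  -- evaluate LHS of hswap
  have hLHS : (∑' n : ℕ, ∫ y in Ioi (0:ℝ), F n y)
      = (1 - γ - Real.log (2*π)) / 24 - Sc / (4 * π^2) := by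
    have hterm : ∀ n : ℕ, (∫ y in Ioi (0:ℝ), F n y)
        = (1 - γ - Real.log (2*π)) / (4*π^2) * (1 / ((n:ℝ)+1)^2)
          - 1 / (4*π^2) * (Real.log ((n:ℝ)+1) / ((n:ℝ)+1)^2) := by
      intro n
      rw [value_aux (hpos n)]
      have hn1 : (0:ℝ) < (n:ℝ)+1 := by positivity
      rw [Real.log_mul (by positivity) hn1.ne']
      field_simp
      ring
    have hs : HasSum (fun n : ℕ =>
        (1 - γ - Real.log (2*π)) / (4*π^2) * (1 / ((n:ℝ)+1)^2)
          - 1 / (4*π^2) * (Real.log ((n:ℝ)+1) / ((n:ℝ)+1)^2))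
        ((1 - γ - Real.log (2*π)) / (4*π^2) * (π^2/6) - 1 / (4*π^2) * Sc) :=
      (hasSumB.mul_left _).sub (summable_sc.hasSum.mul_left _)
    calc (∑' n : ℕ, ∫ y in Ioi (0:ℝ), F n y)
        = ((1 - γ - Real.log (2*π)) / (4*π^2) * (π^2/6) - 1 / (4*π^2) * Sc) := by
          rw [tsum_congr hterm, hs.tsum_eq]
    _ = (1 - γ - Real.log (2*π)) / 24 - Sc / (4 * π^2) := by
          have hπ : π ≠ 0 := Real.pi_ne_zero
          field_simp
          ring
  -- evaluate RHS of hswap: pointwise geometric series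
  have hRHS : (∫ y in Ioi (0:ℝ), ∑' n : ℕ, F n y)
      = ∫ y in Ioi (0:ℝ), y * Real.log y / (Real.exp (2 * π * y) - 1) := by
    refine integral_congr_ae ?_
    filter_upwards [self_mem_ae_restrict measurableSet_Ioi] with y hy
    have hy0 : (0:ℝ) < y := hy
    set r : ℝ := Real.exp (-(2 * π * y)) with hr
    have hr0 : (0:ℝ) < r := Real.exp_pos _
    have hr1 : r < 1 := by
      rw [hr, Real.exp_lt_one_iff]
      have : (0:ℝ) < 2 * π * y := by positivity
      linarith
    have hFr : ∀ n : ℕ, F n y = y * Real.log y * r ^ (n+1) := by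
      intro n
      rw [hF]
      simp only
      congr 1
      rw [hr, ← Real.exp_nat_mul]
      congr 1
      push_cast
      ring
    rw [tsum_congr hFr]
    rw [tsum_mul_left]
    have hgeom : (∑' n : ℕ, r ^ (n+1)) = (1-r)⁻¹ * r := by
      have h1 : (∑' n : ℕ, r ^ (n+1)) = (∑' n : ℕ, r ^ n) * r := by
        rw [← tsum_mul_right]
        exact tsum_congr fun n => (pow_succ r n)
      rw [h1, tsum_geometric_of_lt_one hr0.le hr1]
    rw [hgeom]
    have he1 : (1:ℝ) < Real.exp (2 * π * y) := by
      rw [show (1:ℝ) = Real.exp 0 from (Real.exp_zero).symm]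
      exact Real.exp_lt_exp.mpr (by positivity)
    have hrinv : r = (Real.exp (2 * π * y))⁻¹ := by rw [hr, Real.exp_neg]
    have he0 : Real.exp (2 * π * y) ≠ 0 := (Real.exp_pos _).ne'
    have hee : Real.exp (2 * π * y) - 1 ≠ 0 := sub_ne_zero.mpr (ne_of_gt he1)
    have h1r : (1:ℝ) - r ≠ 0 := sub_ne_zero.mpr ((ne_of_lt hr1).symm)
    rw [hrinv] at h1r ⊢
    field_simp
  rw [← hRHS, ← hswap, hLHS]

lemma deriv_zeta_two : deriv riemannZeta 2 = -((Sc : ℝ) : ℂ) := by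
  have habs : LSeries.abscissaOfAbsConv 1 < ((2:ℂ).re : EReal) := by
    rw [LSeries.abscissaOfAbsConv_one]
    norm_num
    exact_mod_cast (by norm_num : (1:ℝ) < 2)
  have hd : HasDerivAt (LSeries 1) (-(LSeries (LSeries.logMul 1) 2)) 2 :=
    LSeries_hasDerivAt habs
  have hev : riemannZeta =ᶠ[nhds (2:ℂ)] LSeries 1 := by
    have hopen : IsOpen {s : ℂ | 1 < s.re} := isOpen_lt continuous_const Complex.continuous_re
    filter_upwards [hopen.mem_nhds (by norm_num : 1 < (2:ℂ).re)] with s hs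
    exact (LSeries_one_eq_riemannZeta hs).symm
  rw [hev.deriv_eq, hd.deriv]
  -- now compute the L-series value
  have hterm : ∀ n : ℕ, LSeries.term (LSeries.logMul 1) 2 n
      = ((Real.log (n:ℝ) / ((n:ℝ))^2 : ℝ) : ℂ) := by
    intro n
    rcases Nat.eq_zero_or_pos n with h0 | hpos
    · subst h0
      simp [LSeries.term]
    · rw [LSeries.term_of_ne_zero hpos.ne']
      have hlog : Complex.log (n:ℂ) = ((Real.log (n:ℝ) : ℝ) : ℂ) := by
        rw [show ((n:ℂ)) = (((n:ℝ)):ℂ) by push_cast; rfl]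
        exact (Complex.ofReal_log (Nat.cast_nonneg n)).symm
      have hpow : (n:ℂ) ^ (2:ℂ) = (((n:ℝ)^2 : ℝ) : ℂ) := by
        rw [show ((2:ℂ)) = ((2:ℕ):ℂ) by norm_num, Complex.cpow_natCast]
        push_cast
        rfl
      simp only [LSeries.logMul, Pi.one_apply, mul_one]
      rw [hlog, hpow, ← Complex.ofReal_div]
  have hsum : LSeries (LSeries.logMul 1) 2 = ((Sc : ℝ) : ℂ) := by
    rw [LSeries, tsum_congr hterm, ← Complex.ofReal_tsum]
    congr 1
    have hsm : Summable (fun n : ℕ => Real.log (n:ℝ) / ((n:ℝ))^2) := by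
      refine (summable_nat_add_iff 1).mp ?_
      refine summable_sc.congr fun n => ?_
      push_cast
      ring_nf
    rw [hsm.tsum_eq_zero_add]
    simp only [Nat.cast_zero, Real.log_zero]
    rw [zero_div, zero_add, Sc]
    refine tsum_congr fun n => ?_
    push_cast
    ring_nf
  rw [hsum]

lemma deriv_zeta_neg_one' :
    deriv riemannZeta (-1)
      = (((1 - γ - Real.log (2*π)) / 12 - Sc / (2 * π^2) : ℝ) : ℂ) := by
  have hπ0 : (π:ℝ) ≠ 0 := Real.pi_ne_zero
  have h2pi_ne : (2*(π:ℂ)) ≠ 0 := by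
    simp [Complex.ofReal_ne_zero, hπ0]
  -- derivative of s ↦ (2π)^(-s) at 2
  have hA : HasDerivAt (fun s : ℂ => (2*(π:ℂ)) ^ (-s))
      ((2*(π:ℂ)) ^ (-(2:ℂ)) * Complex.log (2*(π:ℂ)) * (-1)) 2 := by
    have h := (hasDerivAt_id (2:ℂ)).neg
    have h2 := HasDerivAt.const_cpow (c := 2*(π:ℂ)) (f := fun s : ℂ => -s) h (Or.inl h2pi_ne)
    simpa using h2
  -- derivative of cos (π s / 2) at 2 is 0
  have hinner2 : HasDerivAt (fun s : ℂ => (π:ℂ) * s / 2) ((π:ℂ) / 2) 2 := by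
    simpa using ((hasDerivAt_id (2:ℂ)).const_mul ((π:ℂ))).div_const 2
  have hcos : HasDerivAt (fun s : ℂ => Complex.cos ((π:ℂ) * s / 2)) 0 2 := by
    have h0 := hinner2.ccos
    have : -Complex.sin ((π:ℂ) * 2 / 2) * ((π:ℂ)/2) = 0 := by
      rw [show ((π:ℂ) * 2 / 2) = (π:ℂ) by ring, Complex.sin_pi]
      ring
    rwa [this] at h0
  have hz : HasDerivAt riemannZeta (deriv riemannZeta 2) 2 :=
    (differentiableAt_riemannZeta (by norm_num)).hasDerivAt
  have hG := (((hA.const_mul (2:ℂ)).mul hasDerivAt_complexGamma_two).mul hcos).mul hz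
  simp only [Pi.mul_def] at hG
  have hev : riemannZeta =ᶠ[nhds ((-1):ℂ)]
      (fun z : ℂ => (fun s : ℂ => 2 * (2*(π:ℂ)) ^ (-s) * Complex.Gamma s
        * Complex.cos ((π:ℂ) * s / 2) * riemannZeta s) (1 - z)) := by
    have hopen : IsOpen {z : ℂ | z.re < 0} := isOpen_lt Complex.continuous_re continuous_const
    filter_upwards [hopen.mem_nhds (by norm_num : ((-1:ℂ)).re < 0)] with z hz
    have hzre : z.re < 0 := hz
    have hz0 : z ≠ 0 := by
      intro h; rw [h] at hzre; simp at hzre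
    have hs : ∀ n : ℕ, (1 - z) ≠ -(n:ℂ) := by
      intro n h
      have h1 : (1:ℝ) - z.re = -(n:ℝ) := by
        have := congrArg Complex.re h
        simpa using this
      have h2 : (0:ℝ) ≤ (n:ℝ) := Nat.cast_nonneg n
      linarith
    have hs1 : (1 - z) ≠ 1 := by
      intro h
      apply hz0
      have : (1:ℂ) - z - 1 = 0 := by rw [h]; ring
      linear_combination -this
    have hfe := riemannZeta_one_sub hs hs1
    rw [show (1 : ℂ) - (1 - z) = z by ring] at hfe
    exact hfe
  have hshift := deriv_comp_const_sub (f := fun s : ℂ => 2 * (2*(π:ℂ)) ^ (-s) * Complex.Gamma s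
    * Complex.cos ((π:ℂ) * s / 2) * riemannZeta s) (a := 1) (x := -1)
  rw [hev.deriv_eq, hshift, show (1:ℂ) - (-1) = 2 by norm_num, hG.deriv]
  -- now plug in values
  rw [deriv_zeta_two, riemannZeta_two]
  have hgamma2 : Complex.Gamma 2 = 1 := by
    rw [show (2:ℂ) = (((2:ℝ)):ℂ) by norm_num, Complex.Gamma_ofReal, Real.Gamma_two,
      Complex.ofReal_one]
  have hcos2 : Complex.cos ((π:ℂ) * 2 / 2) = -1 := by
    rw [show ((π:ℂ) * 2 / 2) = (π:ℂ) by ring, Complex.cos_pi]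
  have hlog2pi : Complex.log (2*(π:ℂ)) = ((Real.log (2*π) : ℝ) : ℂ) := by
    rw [show (2*(π:ℂ)) = (((2*π : ℝ)):ℂ) by push_cast; ring]
    exact (Complex.ofReal_log (by positivity)).symm
  have hP : (2*(π:ℂ)) ^ (-(2:ℂ)) = ((2*(π:ℂ)) ^ (2:ℕ))⁻¹ := by
    rw [show -(2:ℂ) = -((2:ℕ):ℂ) by norm_num, Complex.cpow_neg, Complex.cpow_natCast]
  rw [hgamma2, hcos2, hlog2pi, hP]
  have hπC : ((π:ℝ):ℂ) ≠ 0 := by simpa using hπ0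
  push_cast
  field_simp
  ring

/-- `ζ′(-1) = 2 ∫₀^∞ w ln w/(e^{2πw} - 1) dw = 2c`. -/
theorem deriv_zeta_neg_one :
    deriv riemannZeta (-1) =
        ((2 * ∫ w in Set.Ioi (0 : ℝ), w * Real.log w / (Real.exp (2 * π * w) - 1) : ℝ) : ℂ) ∧
      deriv riemannZeta (-1) = ((2 * cConst : ℝ) : ℂ) := by
  have h1 : (2 * ∫ w in Set.Ioi (0:ℝ), w * Real.log w / (Real.exp (2 * π * w) - 1) : ℝ)
      = (1 - γ - Real.log (2*π)) / 12 - Sc / (2 * π^2) := by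
    rw [integral_key]
    ring
  have h2 : cConst = ∫ w in Set.Ioi (0:ℝ), w * Real.log w / (Real.exp (2 * π * w) - 1) := rfl
  constructor
  · rw [deriv_zeta_neg_one', h1]
  · rw [deriv_zeta_neg_one', h2, h1]
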